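/- arXiv:1401.0334 — 5 statements merged into one kernel-verified Lean document; each statement's English description precedes it below -/
import Mathlib

section
/- Let X be a real Banach space, D a symmetric dictionary in X, and E : X → ℝ a uniformly smooth convex Fréchet differentiable function such that E(x+uy) − E(x) − u⟨E'(x),y⟩ ≤ 2μ(u) for all x ∈ D_2 := {z ∈ X : E(z) ≤ E(0)+2}, all y with ‖y‖ = 1, and all |u| ≤ 1, where μ : [0,1] → [0,∞) satisfies μ(u) = o(u) as u → 0. Assume the set D_C := {x ∈ X : E(x) ≤ E(0) + C} is bounded for every finite C, and assume the coefficient sequence C = (c_j) with c_j ∈ [0,1] satisfies Σ_{k=1}^∞ c_k = ∞ and Σ_{k=1}^∞ μ(c_k) ≤ 1. Then every realization (G_m) of the EGA(C) satisfies lim_{m→∞} E(G_m) = inf_{x ∈ X} E(x). -/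
open Set Filter

variable {X : Type*} [NormedAddCommGroup X] [NormedSpace ℝ X] [CompleteSpace X]

/-- `A1 D` is the closure (in `X`) of the convex hull of the dictionary `D`. -/
def A1 (D : Set X) : Set X := closure (convexHull ℝ D)

/-- A symmetric dictionary: all elements have norm one, the set is symmetric,
and its closed linear span is all of `X`. -/
def SymmetricDictionary (D : Set X) : Prop :=
  (∀ g ∈ D, ‖g‖ = 1) ∧ (∀ g ∈ D, -g ∈ D) ∧
    closure (Submodule.span ℝ D : Set X) = Set.univ

/-- The modulus of smoothness of `E` on a set `S`:
`ρ(E,S,u) = (1/2) sup {|E(x+uy)+E(x-uy)-2E(x)| : x ∈ S, ‖y‖ = 1}`. -/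
noncomputable def modSmooth (E : X → ℝ) (S : Set X) (u : ℝ) : ℝ :=
  sSup {r : ℝ | ∃ x ∈ S, ∃ y : X, ‖y‖ = 1 ∧
    r = |E (x + u • y) + E (x - u • y) - 2 * E x| / 2}

/-- `E` is uniformly smooth on `S` if `ρ(E,S,u)/u → 0` as `u → 0+`. -/
def UniformlySmoothOn (E : X → ℝ) (S : Set X) : Prop :=
  Filter.Tendsto (fun u => modSmooth E S u / u) (nhdsWithin 0 (Set.Ioi 0)) (nhds 0)

lemma grad_ineq {E : X → ℝ} (hE : ConvexOn ℝ Set.univ E)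
    {x : X} {F : X →L[ℝ] ℝ} (hF : HasFDerivAt E F x) (y : X) :
    E x + F (y - x) ≤ E y := by
  set v := y - x with hv
  have hline : HasDerivAt (fun t : ℝ => t • v + x) v 0 := by
    simpa using ((hasDerivAt_id (0:ℝ)).smul_const v).add_const x
  set φ : ℝ → ℝ := fun t => E (t • v + x) with hφ
  have hF' : HasFDerivAt E F ((0:ℝ) • v + x) := by simpa using hF
  have hφ0 : HasDerivAt φ (F v) 0 := hF'.comp_hasDerivAt 0 hline
  have hconvφ : ConvexOn ℝ Set.univ φ := by
    have h := hE.comp_affineMap (AffineMap.lineMap x (x + v) : ℝ →ᵃ[ℝ] X)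
    simpa [hφ, Function.comp_def, AffineMap.lineMap_apply, add_sub_cancel_left] using h
  have hslope := hconvφ.le_slope_of_hasDerivAt (Set.mem_univ (0:ℝ)) (Set.mem_univ (1:ℝ))
    one_pos hφ0
  have h1 : slope φ 0 1 = φ 1 - φ 0 := by simp [slope_def_field]
  have hφ1 : φ 1 = E y := by simp [hφ, hv]
  have hφz : φ 0 = E x := by simp [hφ]
  rw [h1, hφ1, hφz] at hslope
  linarith

/-- Let `E` be a uniformly smooth convex Fréchet differentiable
function with `E(x+uy) - E(x) - u⟨E'(x),y⟩ ≤ 2μ(u)` on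
`D₂ = {x : E x ≤ E 0 + 2}` for `‖y‖ = 1`, `|u| ≤ 1`, where `μ(u) = o(u)`.
If every sublevel set `D_C` is bounded and the coefficients `c_j ∈ [0,1]`
satisfy `Σ c_k = ∞` and `Σ μ(c_k) ≤ 1`, then every realization of EGA(C)
satisfies `lim E (G m) = inf_X E`. -/
theorem ega_c_converges
    (D : Set X) (hD : SymmetricDictionary D)
    (E : X → ℝ) (hEconv : ConvexOn ℝ Set.univ E)
    (E' : X → X →L[ℝ] ℝ) (hE' : ∀ x : X, HasFDerivAt E (E' x) x)
    (hEsm : UniformlySmoothOn E Set.univ)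
    (μ : ℝ → ℝ) (hμ0 : ∀ u ∈ Set.Icc (0 : ℝ) 1, 0 ≤ μ u)
    (hμo : Filter.Tendsto (fun u => μ u / u) (nhdsWithin 0 (Set.Ioi 0)) (nhds 0))
    (hsmooth : ∀ x : X, E x ≤ E 0 + 2 → ∀ y : X, ‖y‖ = 1 → ∀ u : ℝ, |u| ≤ 1 →
      E (x + u • y) - E x - u * E' x y ≤ 2 * μ u)
    (hbdd : ∀ Cb : ℝ, Bornology.IsBounded {x : X | E x ≤ E 0 + Cb})
    (cseq : ℕ → ℝ) (hcseq : ∀ k : ℕ, 1 ≤ k → cseq k ∈ Set.Icc (0 : ℝ) 1)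
    (hdiv : Filter.Tendsto (fun n => ∑ k ∈ Finset.range n, cseq (k + 1))
      Filter.atTop Filter.atTop)
    (hμsum : Summable (fun k : ℕ => μ (cseq (k + 1))) ∧
      (∑' k : ℕ, μ (cseq (k + 1))) ≤ 1)
    (G φ : ℕ → X) (hG0 : G 0 = 0)
    (hstep : ∀ m : ℕ, 1 ≤ m →
      φ m ∈ D ∧
      E (G (m - 1) + cseq m • φ m) =
        sInf {r : ℝ | ∃ g ∈ D, r = E (G (m - 1) + cseq m • g)} ∧
      G m = G (m - 1) + cseq m • φ m) :
    Filter.Tendsto (fun m => E (G m)) Filter.atTop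
      (nhds (sInf (Set.range E))) := by
  classical
  obtain ⟨hDnorm, hDsym, hDspan⟩ := hD
  by_cases hDne : D.Nonempty
  swap
  · -- trivial space case
    have hD0 : D = ∅ := Set.not_nonempty_iff_eq_empty.mp hDne
    have hall : ∀ x : X, x = 0 := by
      intro x
      have hx : x ∈ closure (Submodule.span ℝ D : Set X) := by
        rw [hDspan]; exact Set.mem_univ x
      rw [hD0] at hx
      simpa [Submodule.span_empty] using hx
    have hrange : Set.range E = {E 0} := by
      apply Set.eq_singleton_iff_unique_mem.mpr
      exact ⟨⟨0, rfl⟩, by rintro r ⟨x, rfl⟩; rw [hall x]⟩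
    have hconst : ∀ m, E (G m) = E 0 := fun m => by rw [hall (G m)]
    simp only [hconst, hrange, csInf_singleton]
    exact tendsto_const_nhds
  obtain ⟨g₀, hg₀⟩ := hDne
  -- reindexed step data
  have hstep' : ∀ m : ℕ, φ (m+1) ∈ D ∧
      E (G m + cseq (m+1) • φ (m+1)) =
        sInf {r : ℝ | ∃ g ∈ D, r = E (G m + cseq (m+1) • g)} ∧
      G (m+1) = G m + cseq (m+1) • φ (m+1) := by
    intro m
    simpa using hstep (m+1) (Nat.le_add_left 1 m)
  have hc : ∀ m : ℕ, cseq (m+1) ∈ Set.Icc (0:ℝ) 1 := fun m => hcseq (m+1) (Nat.le_add_left 1 m)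
  have hμc : ∀ m : ℕ, 0 ≤ μ (cseq (m+1)) := fun m => hμ0 _ (hc m)
  have hpartial : ∀ m : ℕ, ∑ k ∈ Finset.range m, μ (cseq (k+1)) ≤ 1 :=
    fun m => le_trans (Summable.sum_le_tsum _ (fun i _ => hμc i) hμsum.1) hμsum.2
  -- global lower bound for E
  obtain ⟨R, hR⟩ := (hbdd 1).subset_closedBall 0
  set R' := max R 0 with hR'
  clear_value R'
  set Blo := min (E 0 + 1) (E 0 - ‖E' 0‖ * R') with hBlodef
  clear_value Blo
  have hlow : ∀ x : X, Blo ≤ E x := by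
    intro x
    rcases le_or_gt (E x) (E 0 + 1) with hx | hx
    · have hxball : x ∈ Metric.closedBall (0:X) R := hR hx
      have hxnorm : ‖x‖ ≤ R' := by
        have h := Metric.mem_closedBall.mp hxball
        rw [dist_zero_right] at h
        rw [hR']
        exact le_trans h (le_max_left R 0)
      have hgi := grad_ineq hEconv (hE' 0) x
      rw [sub_zero] at hgi
      have h2 : |E' 0 x| ≤ ‖E' 0‖ * ‖x‖ := by
        simpa [Real.norm_eq_abs] using (E' 0).le_opNorm x
      have h3 : ‖E' 0‖ * ‖x‖ ≤ ‖E' 0‖ * R' := mul_le_mul_of_nonneg_left hxnorm (norm_nonneg _)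
      have h4 := neg_abs_le (E' 0 x)
      have h5 := min_le_right (E 0 + 1) (E 0 - ‖E' 0‖ * R')
      rw [← hBlodef] at h5
      linarith
    · rw [hBlodef]
      exact le_trans (min_le_left _ _) hx.le
  have hrne : (Set.range E).Nonempty := ⟨E 0, 0, rfl⟩
  have hbdl : BddBelow (Set.range E) := ⟨Blo, by rintro r ⟨x, rfl⟩; exact hlow x⟩
  have hInf_le : ∀ x : X, sInf (Set.range E) ≤ E x := fun x => csInf_le hbdl ⟨x, rfl⟩
  -- greedy step gives inf over dictionary
  have hsinf_le : ∀ (m : ℕ), ∀ g ∈ D, E (G (m+1)) ≤ E (G m + cseq (m+1) • g) := by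
    intro m g hg
    rw [(hstep' m).2.2, (hstep' m).2.1]
    exact csInf_le ⟨Blo, by rintro r ⟨g', hg', rfl⟩; exact hlow _⟩ ⟨g, hg, rfl⟩
  have habs1 : ∀ m : ℕ, |cseq (m+1)| ≤ 1 := by
    intro m; rcases hc m with ⟨h0, h1⟩; rw [abs_of_nonneg h0]; exact h1
  have hkey : ∀ m : ℕ, E (G m) ≤ E 0 + 2 → ∀ g ∈ D,
      E (G (m+1)) ≤ E (G m) + cseq (m+1) * E' (G m) g + 2 * μ (cseq (m+1)) := by
    intro m hm g hg
    have h1 := hsinf_le m g hg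
    have h2 := hsmooth (G m) hm g (hDnorm g hg) (cseq (m+1)) (habs1 m)
    linarith
  have hsign : ∀ m : ℕ, ∃ g ∈ D, E' (G m) g ≤ 0 := by
    intro m
    rcases le_or_gt (E' (G m) g₀) 0 with h | h
    · exact ⟨g₀, hg₀, h⟩
    · exact ⟨-g₀, hDsym g₀ hg₀, by rw [map_neg]; linarith⟩
  have hD2 : ∀ m : ℕ, E (G m) ≤ E 0 + 2 * ∑ k ∈ Finset.range m, μ (cseq (k+1)) := by
    intro m
    induction m with
    | zero => simp [hG0]
    | succ n ih =>
      have hmem : E (G n) ≤ E 0 + 2 := by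
        have h1 := hpartial n
        have h2 : (0:ℝ) ≤ ∑ k ∈ Finset.range n, μ (cseq (k+1)) :=
          Finset.sum_nonneg fun k _ => hμc k
        linarith
      obtain ⟨g, hg, hgle⟩ := hsign n
      have h := hkey n hmem g hg
      have hnp : cseq (n+1) * E' (G n) g ≤ 0 := mul_nonpos_iff.mpr (Or.inl ⟨(hc n).1, hgle⟩)
      rw [Finset.sum_range_succ]
      linarith
  have hD2' : ∀ m : ℕ, E (G m) ≤ E 0 + 2 := by
    intro m
    have h1 := hpartial m
    have h2 := hD2 m
    linarith
  have hmono : ∀ m : ℕ, E (G (m+1)) ≤ E (G m) + 2 * μ (cseq (m+1)) := by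
    intro m
    obtain ⟨g, hg, hgle⟩ := hsign m
    have h := hkey m (hD2' m) g hg
    have hnp : cseq (m+1) * E' (G m) g ≤ 0 := mul_nonpos_iff.mpr (Or.inl ⟨(hc m).1, hgle⟩)
    linarith
  -- convergence of E (G m)
  set T : ℕ → ℝ := fun m => (∑' k, μ (cseq (k+1))) - ∑ k ∈ Finset.range m, μ (cseq (k+1)) with hT
  clear_value T
  have hTnonneg : ∀ m, 0 ≤ T m := by
    intro m
    have h := Summable.sum_le_tsum (Finset.range m) (fun i _ => hμc i) hμsum.1
    simp only [hT]; linarith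
  have hT0 : Tendsto T atTop (nhds 0) := by
    have h1 := hμsum.1.hasSum.tendsto_sum_nat
    have h2 := (tendsto_const_nhds :
      Tendsto (fun _ : ℕ => ∑' k, μ (cseq (k+1))) atTop
        (nhds (∑' k, μ (cseq (k+1))))).sub h1
    simpa [hT] using h2
  set a : ℕ → ℝ := fun m => E (G m) + 2 * T m with ha
  clear_value a
  have haanti : Antitone a := by
    apply antitone_nat_of_succ_le
    intro n
    have h1 := hmono n
    have hTs : T n - T (n+1) = μ (cseq (n+1)) := by
      simp only [hT, Finset.sum_range_succ]; ring
    simp only [ha]; linarith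
  have habb : BddBelow (Set.range a) := by
    refine ⟨Blo, ?_⟩
    rintro r ⟨m, rfl⟩
    have h1 := hTnonneg m
    have h2 := hlow (G m)
    simp only [ha]; linarith
  set α := ⨅ m, a m with hα
  clear_value α
  have hatend : Tendsto a atTop (nhds α) := by
    rw [hα]; exact tendsto_atTop_ciInf haanti habb
  have hEtend : Tendsto (fun m => E (G m)) atTop (nhds α) := by
    have h := hatend.sub (hT0.const_mul 2)
    simpa [ha] using h
  have hge : ∀ m, α - 2 * T m ≤ E (G m) := by
    intro m
    have h := ciInf_le habb m
    rw [← hα] at h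
    simp only [ha] at h
    linarith
  have hαge : sInf (Set.range E) ≤ α := ge_of_tendsto' hEtend fun m => hInf_le (G m)
  -- main part: α ≤ sInf (range E)
  have hαle : α ≤ sInf (Set.range E) := by
    by_contra hcon
    push_neg at hcon
    obtain ⟨r, ⟨f, rfl⟩, hfα⟩ := exists_lt_of_csInf_lt hrne hcon
    obtain ⟨θ, hθ, hθpos⟩ : ∃ θ : ℝ, θ = α - E f ∧ 0 < θ := ⟨α - E f, rfl, by linarith⟩
    -- uniform bound on ‖E' x‖ over D₂
    set M := (E 0 + 2) - Blo + 2 * μ 1 with hM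
    clear_value M
    have hμ1 : 0 ≤ μ 1 := hμ0 1 ⟨zero_le_one, le_refl 1⟩
    have hM1 : 1 ≤ M := by
      have h5 : Blo ≤ E 0 + 1 := by rw [hBlodef]; exact min_le_left _ _
      rw [hM]; linarith
    have hMb : ∀ x : X, E x ≤ E 0 + 2 → ‖E' x‖ ≤ M := by
      intro x hx
      apply ContinuousLinearMap.opNorm_le_of_unit_norm (by linarith)
      intro y hy
      have h1 := hsmooth x hx y hy 1 (by norm_num)
      have h2 := hsmooth x hx (-y) (by rwa [norm_neg]) 1 (by norm_num)
      have hly := hlow (x + (1:ℝ) • y)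
      have hly' := hlow (x + (1:ℝ) • -y)
      rw [map_neg] at h2
      rw [Real.norm_eq_abs, abs_le]
      rw [hM]
      constructor <;> linarith
    -- approximate f from the span
    have hfmem : f ∈ closure (Submodule.span ℝ D : Set X) := by
      rw [hDspan]; exact Set.mem_univ f
    have hδpos : 0 < θ / (4 * (M + 1)) := div_pos hθpos (by linarith)
    obtain ⟨f', hf'mem, hf'close⟩ := Metric.mem_closure_iff.mp hfmem _ hδpos
    have hMff' : M * ‖f - f'‖ ≤ θ / 4 := by
      have h1 : ‖f - f'‖ ≤ θ / (4 * (M + 1)) := by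
        rw [← dist_eq_norm]; exact hf'close.le
      have h2 : M * ‖f - f'‖ ≤ (M+1) * (θ / (4 * (M + 1))) :=
        mul_le_mul (by linarith) h1 (norm_nonneg _) (by linarith)
      have hne : M + 1 ≠ 0 := by linarith
      have h3 : (M+1) * (θ / (4 * (M + 1))) = θ/4 := by field_simp
      linarith
    obtain ⟨l, hlsupp, hlsum⟩ := Submodule.mem_span_set.mp hf'mem
    set B := max (∑ g ∈ l.support, |l g|) 1 with hB
    clear_value B
    have hB1 : 1 ≤ B := by rw [hB]; exact le_max_right _ _
    set Δ : ℕ → ℝ := fun m => E (G m) - E (G (m+1)) + 2 * μ (cseq (m+1)) with hΔ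
    clear_value Δ
    have hΔ0 : ∀ m, 0 ≤ Δ m := by
      intro m; have h := hmono m; simp only [hΔ]; linarith
    have hdag : ∀ m : ℕ, ∀ g ∈ D, cseq (m+1) * (E' (G m) g) ≤ Δ m := by
      intro m g hg
      have h := hkey m (hD2' m) (-g) (hDsym g hg)
      rw [map_neg, mul_neg] at h
      simp only [hΔ]; linarith
    have habsb : ∀ m : ℕ, ∀ g ∈ D, |cseq (m+1) * E' (G m) g| ≤ Δ m := by
      intro m g hg
      have h1 := hdag m g hg
      have h2 := hdag m (-g) (hDsym g hg)
      rw [map_neg, mul_neg] at h2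
      rw [abs_le]; constructor <;> linarith
    have hf'b : ∀ m : ℕ, |cseq (m+1) * E' (G m) f'| ≤ B * Δ m := by
      intro m
      have hmap : E' (G m) f' = ∑ g ∈ l.support, l g * E' (G m) g := by
        rw [← hlsum, Finsupp.sum, map_sum]
        exact Finset.sum_congr rfl fun g _ => by rw [map_smul, smul_eq_mul]
      rw [hmap, Finset.mul_sum]
      refine le_trans (Finset.abs_sum_le_sum_abs _ _) ?_
      have hterm : ∀ g ∈ l.support, |cseq (m+1) * (l g * E' (G m) g)| ≤ |l g| * Δ m := by
        intro g hg
        have hgD : g ∈ D := hlsupp (Finset.mem_coe.mpr hg)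
        have h := habsb m g hgD
        calc |cseq (m+1) * (l g * E' (G m) g)|
            = |l g| * |cseq (m+1) * E' (G m) g| := by
              rw [abs_mul, abs_mul, abs_mul]; ring
          _ ≤ |l g| * Δ m := mul_le_mul_of_nonneg_left h (abs_nonneg _)
      refine le_trans (Finset.sum_le_sum hterm) ?_
      rw [← Finset.sum_mul]
      refine mul_le_mul_of_nonneg_right ?_ (hΔ0 m)
      rw [hB]
      exact le_max_left _ _
    have hGsum : ∀ m : ℕ, G m = ∑ j ∈ Finset.range m, cseq (j+1) • φ (j+1) := by
      intro m
      induction m with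
      | zero => simp [hG0]
      | succ n ih => rw [(hstep' n).2.2, ih, Finset.sum_range_succ]
    set S : ℕ → ℝ := fun m => ∑ j ∈ Finset.range m, cseq (j+1) with hS
    clear_value S
    have hS0 : ∀ m, 0 ≤ S m := fun m => by
      rw [hS]
      exact Finset.sum_nonneg fun j _ => (hc j).1
    have hGb : ∀ m : ℕ, cseq (m+1) * E' (G m) (G m) ≤ S m * Δ m := by
      intro m
      have hmap : E' (G m) (G m) = ∑ j ∈ Finset.range m, cseq (j+1) * E' (G m) (φ (j+1)) := by
        nth_rewrite 2 [hGsum m]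
        rw [map_sum]
        exact Finset.sum_congr rfl fun j _ => by rw [map_smul, smul_eq_mul]
      rw [hmap, Finset.mul_sum]
      have hterm : ∀ j ∈ Finset.range m,
          cseq (m+1) * (cseq (j+1) * E' (G m) (φ (j+1))) ≤ cseq (j+1) * Δ m := by
        intro j _
        have h := hdag m (φ (j+1)) (hstep' j).1
        calc cseq (m+1) * (cseq (j+1) * E' (G m) (φ (j+1)))
            = cseq (j+1) * (cseq (m+1) * E' (G m) (φ (j+1))) := by ring
          _ ≤ cseq (j+1) * Δ m := mul_le_mul_of_nonneg_left h (hc j).1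
      refine le_trans (Finset.sum_le_sum hterm) ?_
      rw [← Finset.sum_mul]
      simp only [hS]
      exact le_refl _

    have hcomb : ∀ m : ℕ,
        cseq (m+1) * (E (G m) - E f) ≤ (B + S m) * Δ m + cseq (m+1) * (θ/4) := by
      intro m
      have hgi := grad_ineq hEconv (hE' (G m)) f
      have hsplit : E' (G m) (G m) - E' (G m) f' + E' (G m) (f' - f)
          = - (E' (G m) (f - G m)) := by
        rw [map_sub, map_sub]; ring
      have h1 := hGb m
      have h2 : cseq (m+1) * (- E' (G m) f') ≤ B * Δ m := by
        have h := (abs_le.mp (hf'b m)).1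
        rw [mul_neg]; linarith
      have h3 : cseq (m+1) * (E' (G m) (f' - f)) ≤ cseq (m+1) * (θ/4) := by
        have hop := (E' (G m)).le_opNorm (f' - f)
        have hop' : E' (G m) (f' - f) ≤ ‖E' (G m)‖ * ‖f' - f‖ :=
          le_trans (le_abs_self _) (by simpa [Real.norm_eq_abs] using hop)
        have hnorm : ‖f' - f‖ = ‖f - f'‖ := norm_sub_rev _ _
        have hM' := hMb (G m) (hD2' m)
        have h5 : ‖E' (G m)‖ * ‖f' - f‖ ≤ M * ‖f - f'‖ := by
          rw [hnorm]; exact mul_le_mul_of_nonneg_right hM' (norm_nonneg _)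
        have h6 : E' (G m) (f' - f) ≤ θ/4 := le_trans hop' (le_trans h5 hMff')
        exact mul_le_mul_of_nonneg_left h6 (hc m).1
      have hle : E (G m) - E f
          ≤ E' (G m) (G m) + (- E' (G m) f') + E' (G m) (f' - f) := by linarith
      have hmul := mul_le_mul_of_nonneg_left hle (hc m).1
      have hexp : cseq (m+1) * (E' (G m) (G m) + (- E' (G m) f') + E' (G m) (f' - f))
          = cseq (m+1) * E' (G m) (G m) + cseq (m+1) * (- E' (G m) f')
            + cseq (m+1) * (E' (G m) (f' - f)) := by ring
      calc cseq (m+1) * (E (G m) - E f)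
          ≤ cseq (m+1) * (E' (G m) (G m) + (- E' (G m) f') + E' (G m) (f' - f)) := hmul
        _ = cseq (m+1) * E' (G m) (G m) + cseq (m+1) * (- E' (G m) f')
            + cseq (m+1) * (E' (G m) (f' - f)) := hexp
        _ ≤ S m * Δ m + B * Δ m + cseq (m+1) * (θ/4) := add_le_add (add_le_add h1 h2) h3
        _ = (B + S m) * Δ m + cseq (m+1) * (θ/4) := by ring
    obtain ⟨N, hN⟩ := eventually_atTop.mp
      (hT0.eventually_lt_const (show (0:ℝ) < θ/8 by linarith))
    have hmain : ∀ m, N ≤ m → cseq (m+1) * (θ/2) ≤ (B + S m) * Δ m := by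
      intro m hm
      have hTm := hN m hm
      have h1 := hge m
      have h2 := hcomb m
      have h3 : cseq (m+1) * (3*θ/4) ≤ cseq (m+1) * (E (G m) - E f) := by
        apply mul_le_mul_of_nonneg_left _ (hc m).1
        linarith
      have hring : cseq (m+1) * (θ/2) = cseq (m+1) * (3*θ/4) - cseq (m+1) * (θ/4) := by ring
      linarith
    have hL : ∀ m, N ≤ m →
        (θ/2) * (Real.log (B + S (m+1)) - Real.log (B + S m)) ≤ Δ m := by
      intro m hm
      have hpos : (0:ℝ) < B + S m := by linarith [hS0 m]
      have hpos' : (0:ℝ) < B + S (m+1) := by linarith [hS0 (m+1)]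
      have hSsucc : S (m+1) = S m + cseq (m+1) := by
        simp only [hS]; rw [Finset.sum_range_succ]
      have hquot : Real.log (B + S (m+1)) - Real.log (B + S m) ≤ cseq (m+1) / (B + S m) := by
        have h1 : Real.log ((B + S (m+1)) / (B + S m)) ≤ (B + S (m+1)) / (B + S m) - 1 :=
          Real.log_le_sub_one_of_pos (div_pos hpos' hpos)
        rw [Real.log_div (ne_of_gt hpos') (ne_of_gt hpos)] at h1
        have hne : B + S m ≠ 0 := ne_of_gt hpos
        have h2 : (B + S (m+1)) / (B + S m) - 1 = cseq (m+1) / (B + S m) := by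
          rw [hSsucc]; field_simp; ring
        linarith
      have h3 : (θ/2) * (Real.log (B + S (m+1)) - Real.log (B + S m))
          ≤ (θ/2) * (cseq (m+1) / (B + S m)) :=
        mul_le_mul_of_nonneg_left hquot (by linarith)
      have heq : (θ/2) * (cseq (m+1) / (B + S m)) = (cseq (m+1) * (θ/2)) / (B + S m) := by
        ring
      have h4 : (θ/2) * (cseq (m+1) / (B + S m)) ≤ Δ m := by
        rw [heq, div_le_iff₀ hpos]
        have h5 := hmain m hm
        nlinarith [hΔ0 m]
      linarith
    have hsum : ∀ n : ℕ,
        (θ/2) * (Real.log (B + S (N+n)) - Real.log (B + S N)) ≤ E (G N) - Blo + 2 := by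
      intro n
      have htel1 : ∑ i ∈ Finset.range n,
          (Real.log (B + S (N+i+1)) - Real.log (B + S (N+i)))
          = Real.log (B + S (N+n)) - Real.log (B + S N) := by
        have h := Finset.sum_range_sub (fun i => Real.log (B + S (N+i))) n
        simpa [add_assoc] using h
      have htel2 : ∑ i ∈ Finset.range n, (E (G (N+i)) - E (G (N+i+1)))
          = E (G N) - E (G (N+n)) := by
        have h := Finset.sum_range_sub' (fun i => E (G (N+i))) n
        simpa [add_assoc] using h
      have hμb : ∑ i ∈ Finset.range n, μ (cseq (N+i+1)) ≤ 1 := by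
        have hsub := Finset.sum_Ico_eq_sum_range
          (f := fun k => μ (cseq (k+1))) (m := N) (n := N+n)
        rw [Nat.add_sub_cancel_left] at hsub
        have h1 : ∑ i ∈ Finset.range n, μ (cseq (N+i+1))
            = ∑ k ∈ Finset.Ico N (N+n), μ (cseq (k+1)) := by rw [hsub]
        rw [h1]
        refine le_trans (Finset.sum_le_sum_of_subset_of_nonneg ?_ ?_) (hpartial (N+n))
        · intro k hk
          simp only [Finset.mem_Ico, Finset.mem_range] at hk ⊢
          omega
        · intro k _ _; exact hμc k
      have hΔexp : ∑ i ∈ Finset.range n, Δ (N+i)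
          = ∑ i ∈ Finset.range n, (E (G (N+i)) - E (G (N+i+1)))
            + 2 * ∑ i ∈ Finset.range n, μ (cseq (N+i+1)) := by
        simp only [hΔ]
        rw [Finset.sum_add_distrib, Finset.mul_sum]
      have hsum1 : (θ/2) * (Real.log (B + S (N+n)) - Real.log (B + S N))
          ≤ ∑ i ∈ Finset.range n, Δ (N+i) := by
        rw [← htel1, Finset.mul_sum]
        exact Finset.sum_le_sum fun i _ => hL (N+i) (Nat.le_add_right N i)
      have hlo := hlow (G (N+n))
      rw [hΔexp, htel2] at hsum1
      linarith
    have hdiv' : Tendsto (fun n => Real.log (B + S (N+n))) atTop atTop := by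
      have h1 : Tendsto (fun n => S (n + N)) atTop atTop := hdiv.comp (tendsto_add_atTop_nat N)
      have h2 : Tendsto (fun n => B + S (n + N)) atTop atTop :=
        tendsto_atTop_add_const_left atTop B h1
      have h3 := Real.tendsto_log_atTop.comp h2
      have h4 : (fun n => Real.log (B + S (N+n))) = fun n => Real.log (B + S (n+N)) := by
        funext n; rw [Nat.add_comm N n]
      rw [h4]
      exact h3
    have hC : 0 < E (G N) - Blo + 2 := by have := hlow (G N); linarith
    obtain ⟨n, hn⟩ := (hdiv'.eventually_gt_atTop
      (Real.log (B + S N) + (2/θ) * (E (G N) - Blo + 2) + 1)).exists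
    have hfin := hsum n
    have hθne : θ ≠ 0 := ne_of_gt hθpos
    have hcompute : (θ/2) * ((2/θ) * (E (G N) - Blo + 2) + 1)
        = (E (G N) - Blo + 2) + θ/2 := by field_simp
    have h9 : (θ/2) * ((2/θ) * (E (G N) - Blo + 2) + 1)
        < (θ/2) * (Real.log (B + S (N+n)) - Real.log (B + S N)) := by
      apply mul_lt_mul_of_pos_left _ (by linarith)
      linarith
    linarith
  have hfinal : α = sInf (Set.range E) := le_antisymm hαle hαge
  rw [← hfinal]
  exact hEtend
end

section
/- Let c > 0 and p > 0, and let (a_m)_{m≥0} be a sequence of nonnegative real numbers satisfying a_m ≤ a_{m−1}(1 − c·a_{m−1}^p) for all m ≥ 1. Then there exists a constant C depending only on p and c such that a_n ≤ C·n^{−1/p} for all n ≥ 1. -/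
/-- Bernoulli-type inequality for negative exponents: `1 + p*t ≤ (1-t)^(-p)`. -/
lemma bern_neg (p t : ℝ) (hp : 0 < p) (ht : 0 ≤ t) (ht1 : t < 1) :
    1 + p * t ≤ (1 - t) ^ (-p) := by
  have h1 : (0:ℝ) < 1 - t := by linarith
  rw [Real.rpow_def_of_pos h1]
  have hlog : Real.log (1 - t) ≤ -t := by
    have := Real.log_le_sub_one_of_pos h1; linarith
  have hmul : p * t ≤ (-p) * Real.log (1 - t) := by nlinarith
  have hexp := Real.add_one_le_exp ((-p) * Real.log (1 - t))
  rw [mul_comm (Real.log (1 - t)) (-p)]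
  linarith

/-- Key step: if `0 < y ≤ x * (1 - c x^p)` with `x > 0`, then `x^(-p) + c*p ≤ y^(-p)`. -/
lemma key_step (c p x y : ℝ) (hc : 0 < c) (hp : 0 < p) (hx : 0 < x) (hy : 0 < y)
    (hxy : y ≤ x * (1 - c * x ^ p)) : x ^ (-p) + c * p ≤ y ^ (-p) := by
  set t : ℝ := c * x ^ p with htdef
  have ht : 0 < t := mul_pos hc (Real.rpow_pos_of_pos hx p)
  have hpos : 0 < x * (1 - t) := lt_of_lt_of_le hy hxy
  have h1t : 0 < 1 - t := by
    by_contra h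
    push_neg at h
    nlinarith [mul_nonpos_of_nonneg_of_nonpos hx.le h]
  have s1 : (x * (1 - t)) ^ (-p) ≤ y ^ (-p) :=
    Real.rpow_le_rpow_of_nonpos hy hxy (by linarith)
  have s2 : (x * (1 - t)) ^ (-p) = x ^ (-p) * (1 - t) ^ (-p) :=
    Real.mul_rpow hx.le h1t.le
  have s3 : 1 + p * t ≤ (1 - t) ^ (-p) := bern_neg p t hp ht.le (by linarith)
  have hxp : x ^ p * x ^ (-p) = 1 := by
    rw [← Real.rpow_add hx, add_neg_cancel, Real.rpow_zero]
  have hxnp : 0 < x ^ (-p) := Real.rpow_pos_of_pos hx _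
  have s4 : x ^ (-p) * (1 + p * t) ≤ x ^ (-p) * (1 - t) ^ (-p) :=
    mul_le_mul_of_nonneg_left s3 hxnp.le
  have s5 : x ^ (-p) * (1 + p * t) = x ^ (-p) + c * p := by
    have hring : x ^ (-p) * (1 + p * (c * x ^ p))
        = x ^ (-p) + c * p * (x ^ p * x ^ (-p)) := by ring
    rw [htdef, hring, hxp, mul_one]
  rw [s2] at s1
  linarith

/-- If a nonnegative sequence satisfies
`a m ≤ a (m-1) * (1 - c * a (m-1) ^ p)` for all `m ≥ 1`, then
`a n ≤ C * n ^ (-1/p)` for all `n ≥ 1`, with `C` depending only on `p` and `c`. -/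
theorem decay_lemma (c p : ℝ) (hc : 0 < c) (hp : 0 < p) :
    ∃ C : ℝ, 0 < C ∧
      ∀ a : ℕ → ℝ, (∀ m : ℕ, 0 ≤ a m) →
        (∀ m : ℕ, 1 ≤ m → a m ≤ a (m - 1) * (1 - c * a (m - 1) ^ p)) →
        ∀ n : ℕ, 1 ≤ n → a n ≤ C * (n : ℝ) ^ (-(1 / p)) := by
  refine ⟨(c * p) ^ (-(1 / p)), Real.rpow_pos_of_pos (mul_pos hc hp) _, ?_⟩
  intro a ha hrec n hn
  have hmono : ∀ m : ℕ, a (m + 1) ≤ a m := by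
    intro m
    have h := hrec (m + 1) (Nat.le_add_left 1 m)
    simp only [Nat.add_sub_cancel] at h
    nlinarith [mul_nonneg (ha m) (mul_nonneg hc.le (Real.rpow_nonneg (ha m) p))]
  have hanti : Antitone a := antitone_nat_of_succ_le hmono
  by_cases hz : ∃ k, k ≤ n ∧ a k = 0
  · obtain ⟨k, hk, hak⟩ := hz
    have h0 : a n = 0 := le_antisymm ((hanti hk).trans_eq hak) (ha n)
    rw [h0]
    positivity
  · push_neg at hz
    have hpos : ∀ k, k ≤ n → 0 < a k := fun k hk => lt_of_le_of_ne (ha k) (Ne.symm (hz k hk))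
    have main : ∀ m : ℕ, m ≤ n → c * p * m ≤ (a m) ^ (-p) := by
      intro m
      induction m with
      | zero =>
        intro _
        simpa using (Real.rpow_pos_of_pos (hpos 0 (Nat.zero_le n)) (-p)).le
      | succ k ih =>
        intro hk
        have h1 := ih (Nat.le_of_succ_le hk)
        have hrk := hrec (k + 1) (Nat.le_add_left 1 k)
        simp only [Nat.add_sub_cancel] at hrk
        have h2 := key_step c p (a k) (a (k + 1)) hc hp
          (hpos k (Nat.le_of_succ_le hk)) (hpos (k + 1) hk) hrk
        push_cast
        linarith
    have hmain := main n le_rfl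
    have han : 0 < a n := hpos n le_rfl
    have hcn : 0 < c * p * n := by
      have h0n : (0:ℝ) < n := by exact_mod_cast hn
      positivity
    have step2 : ((a n) ^ (-p)) ^ (-(1 / p)) ≤ (c * p * n) ^ (-(1 / p)) :=
      Real.rpow_le_rpow_of_nonpos hcn hmain (neg_nonpos.mpr (by positivity))
    have step3 : ((a n) ^ (-p)) ^ (-(1 / p)) = a n := by
      rw [← Real.rpow_mul han.le, show (-p) * (-(1 / p)) = 1 by field_simp, Real.rpow_one]
    have step4 : (c * p * n) ^ (-(1 / p)) = (c * p) ^ (-(1 / p)) * (n : ℝ) ^ (-(1 / p)) :=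
      Real.mul_rpow (by positivity) (Nat.cast_nonneg n)
    calc a n = ((a n) ^ (-p)) ^ (-(1 / p)) := step3.symm
      _ ≤ (c * p * n) ^ (-(1 / p)) := step2
      _ = (c * p) ^ (-(1 / p)) * (n : ℝ) ^ (-(1 / p)) := step4
end

section
/- Let q ∈ (1,2], δ ∈ (0,1], v > 0, B > 0, and set N := ⌊δ^{−1/q}⌋. Suppose a_0, a_1, …, a_N is a sequence of nonnegative real numbers satisfying a_m ≤ a_{m−1} + inf_{0 ≤ λ ≤ 1} ( −λ v a_{m−1} + B λ^q ) + δ for all 1 ≤ m ≤ N. Then there exists a constant C depending only on q, v, B, and a_0 such that a_m ≤ C·m^{1−q} for all 1 ≤ m ≤ N. -/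
/-- Auxiliary real-arithmetic lemma for the inductive step. -/
lemma seq_aux_step (q v B C x an anp δ : ℝ) (hq1 : 1 < q) (hq2 : q ≤ 2)
    (hv : 0 < v) (hB : 0 < B) (hC0 : 0 < C) (hCbig : B * (3 / v) ^ q + 1 ≤ C)
    (hx4 : 4 ≤ x) (han : 0 ≤ an)
    (hd : δ ≤ (x ^ q)⁻¹)
    (hIH : an ≤ C * (x - 1) ^ (1 - q))
    (hstep : anp ≤ an + (-(3 / (v * x) * v * an) + B * (3 / (v * x)) ^ q) + δ) :
    anp ≤ C * x ^ (1 - q) := by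
  have hx0 : (0:ℝ) < x := by linarith
  have h3v : (0:ℝ) < 3 / v := by positivity
  have hlv : 3 / (v * x) * v = 3 / x := by field_simp
  have heq : an + (-(3 / (v * x) * v * an) + B * (3 / (v * x)) ^ q) + δ
      = (1 - 3 / x) * an + B * (3 / (v * x)) ^ q + δ := by rw [hlv]; ring
  rw [heq] at hstep
  -- l^q = (3/v)^q * (x^q)⁻¹
  have hlq : (3 / (v * x)) ^ q = (3 / v) ^ q * (x ^ q)⁻¹ := by
    have e : 3 / (v * x) = (3 / v) / x := (div_div 3 v x).symm
    rw [e, Real.div_rpow h3v.le hx0.le, div_eq_mul_inv]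
  have hxq0 : (0:ℝ) < x ^ q := Real.rpow_pos_of_pos hx0 q
  have hP0 : (0:ℝ) < x ^ (1 - q) := Real.rpow_pos_of_pos hx0 _
  have hinvxq : (x ^ q)⁻¹ = x ^ (1 - q) / x := by
    rw [Real.rpow_sub hx0, Real.rpow_one]; field_simp
  -- (x-1)^(1-q) ≤ (1 + 2/x) * x^(1-q)
  have hx1 : (0:ℝ) < x - 1 := by linarith
  have hkey : (x - 1) ^ (1 - q) ≤ (1 + 2 / x) * x ^ (1 - q) := by
    have ht : x - 1 = ((x - 1) / x) * x := by field_simp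
    have ht0 : (0:ℝ) < (x - 1) / x := by positivity
    have ht1 : (x - 1) / x ≤ 1 := by rw [div_le_one hx0]; linarith
    have hsplit : (x - 1) ^ (1 - q) = ((x - 1) / x) ^ (1 - q) * x ^ (1 - q) := by
      rw [ht, Real.mul_rpow ht0.le hx0.le]
      congr 2 <;> rw [← ht]
    rw [hsplit]
    have hmono : ((x - 1) / x) ^ (1:ℝ) ≤ ((x - 1) / x) ^ (q - 1) :=
      Real.rpow_le_rpow_of_exponent_ge ht0 ht1 (by linarith)
    have h2 : ((x - 1) / x) ^ (1 - q) = (((x - 1) / x) ^ (q - 1))⁻¹ := by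
      rw [← Real.rpow_neg ht0.le]; ring_nf
    have h3 : ((x - 1) / x) ^ (1 - q) ≤ ((x - 1) / x)⁻¹ := by
      rw [h2]
      apply inv_anti₀ (by positivity)
      simpa using hmono
    have h4 : ((x - 1) / x)⁻¹ = x / (x - 1) := by
      rw [inv_div]
    have h5 : x / (x - 1) ≤ 1 + 2 / x := by
      rw [div_le_iff₀ hx1]
      have hux : 2 / x * x = 2 := div_mul_cancel₀ 2 (ne_of_gt hx0)
      have h6 : 2 / x ≤ 1 := by rw [div_le_one hx0]; linarith
      nlinarith [hux, h6]
    have h7 := le_trans (h4 ▸ h3) h5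
    exact mul_le_mul_of_nonneg_right h7 hP0.le
  have hcoef : (0:ℝ) ≤ 1 - 3 / x := by
    have : 3 / x ≤ 1 := by rw [div_le_one hx0]; linarith
    linarith
  have hδx : δ ≤ x ^ (1 - q) / x := by rw [← hinvxq]; exact hd
  have step1 : anp ≤ (1 - 3 / x) * (C * (1 + 2 / x) * x ^ (1 - q))
      + B * (3 / v) ^ q * (x ^ (1 - q) / x) + x ^ (1 - q) / x := by
    have e1 : (1 - 3 / x) * an ≤ (1 - 3 / x) * (C * (1 + 2 / x) * x ^ (1 - q)) := by
      apply mul_le_mul_of_nonneg_left _ hcoef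
      calc an ≤ C * (x - 1) ^ (1 - q) := hIH
        _ ≤ C * ((1 + 2 / x) * x ^ (1 - q)) := mul_le_mul_of_nonneg_left hkey hC0.le
        _ = C * (1 + 2 / x) * x ^ (1 - q) := by ring
    have e2 : B * (3 / (v * x)) ^ q = B * (3 / v) ^ q * (x ^ (1 - q) / x) := by
      rw [hlq, hinvxq]; ring
    linarith [hstep, e1, hδx]
  have final : (1 - 3 / x) * (C * (1 + 2 / x) * x ^ (1 - q))
      + B * (3 / v) ^ q * (x ^ (1 - q) / x) + x ^ (1 - q) / x ≤ C * x ^ (1 - q) := by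
    set P := x ^ (1 - q) with hPdef
    set D := B * (3 / v) ^ q with hDdef
    have hD0 : 0 < D := by positivity
    have expand : (1 - 3 / x) * (C * (1 + 2 / x) * P) + D * (P / x) + P / x
        = C * P - (C * (1 / x + 6 / (x ^ 2))) * P + (D + 1) * (P / x) := by
      ring
    rw [expand]
    have h1 : (D + 1) * (P / x) ≤ C * (P / x) :=
      mul_le_mul_of_nonneg_right hCbig (by positivity)
    have h2 : C * (P / x) ≤ (C * (1 / x + 6 / (x ^ 2))) * P := by
      have e : C * (P / x) = (C * (1 / x)) * P := by ring
      rw [e]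
      apply mul_le_mul_of_nonneg_right _ hP0.le
      have e2 : C * (1 / x + 6 / (x ^ 2)) = C * (1 / x) + C * (6 / (x ^ 2)) := by ring
      have h0 : (0:ℝ) ≤ C * (6 / (x ^ 2)) := by positivity
      linarith [e2.ge, h0]
    linarith
  exact le_trans step1 final

/-- If a nonnegative finite sequence `a 0, …, a N`, with
`N := ⌊δ^(-1/q)⌋`, satisfies
`a m ≤ a (m-1) + inf_{0 ≤ λ ≤ 1} (-λ v a (m-1) + B λ^q) + δ` for `1 ≤ m ≤ N`,
then `a m ≤ C m^(1-q)` for `1 ≤ m ≤ N`, with `C` depending only on `q, v, B, a 0`. -/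
theorem sequence_lemma (q v B a0 : ℝ) (hq1 : 1 < q) (hq2 : q ≤ 2)
    (hv : 0 < v) (hB : 0 < B) :
    ∃ C : ℝ, 0 < C ∧
      ∀ δ : ℝ, 0 < δ → δ ≤ 1 →
        ∀ a : ℕ → ℝ, a 0 = a0 →
          (∀ m : ℕ, m ≤ Nat.floor (δ ^ (-(1 / q))) → 0 ≤ a m) →
          (∀ m : ℕ, 1 ≤ m → m ≤ Nat.floor (δ ^ (-(1 / q))) →
            a m ≤ a (m - 1) +
              sInf {r : ℝ | ∃ l ∈ Set.Icc (0 : ℝ) 1,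
                r = -(l * v * a (m - 1)) + B * l ^ q} + δ) →
          ∀ m : ℕ, 1 ≤ m → m ≤ Nat.floor (δ ^ (-(1 / q))) →
            a m ≤ C * (m : ℝ) ^ (1 - q) := by
  have hq0 : (0:ℝ) < q := by linarith
  set M : ℕ := max 3 ⌈3 / v⌉₊ with hMdef
  have hM3 : (3:ℕ) ≤ M := le_max_left _ _
  have hM0 : (0:ℝ) < (M:ℝ) := by
    have : (1:ℕ) ≤ M := le_trans (by norm_num) hM3
    exact_mod_cast Nat.lt_of_lt_of_le Nat.zero_lt_one this
  have hMv : 3 / v ≤ (M:ℝ) := le_trans (Nat.le_ceil _) (by exact_mod_cast le_max_right _ _)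
  have h3v : (0:ℝ) < 3 / v := by positivity
  set C : ℝ := (|a0| + 1) * M + B * (3 / v) ^ q + 1 with hCdef
  have hC0 : 0 < C := by
    rw [hCdef]
    have h1 : 0 < (|a0| + 1) * M := by positivity
    have h2 : 0 < B * (3 / v) ^ q := by positivity
    linarith
  have hCbig : B * (3 / v) ^ q + 1 ≤ C := by
    rw [hCdef]
    have h1 : 0 ≤ (|a0| + 1) * M := by positivity
    linarith
  refine ⟨C, hC0, ?_⟩
  intro δ hδ0 hδ1 a ha0 hpos hrec
  set N := Nat.floor (δ ^ (-(1 / q))) with hNdef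
  have hδpow0 : (0:ℝ) < δ ^ (-(1 / q)) := Real.rpow_pos_of_pos hδ0 _
  have hNle : (N:ℝ) ≤ δ ^ (-(1 / q)) := Nat.floor_le hδpow0.le
  have hbdd : ∀ k : ℕ, k ≤ N → BddBelow {r : ℝ | ∃ l ∈ Set.Icc (0 : ℝ) 1,
      r = -(l * v * a k) + B * l ^ q} := by
    intro k hk
    refine ⟨-(v * a k), ?_⟩
    rintro r ⟨l, ⟨hl0, hl1⟩, rfl⟩
    have hak := hpos k hk
    have h1 : 0 ≤ B * l ^ q := by positivity
    have h2 : l * v * a k ≤ v * a k := by nlinarith [mul_nonneg (mul_nonneg (sub_nonneg.mpr hl1) hv.le) hak]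
    linarith
  have hmem : ∀ k : ℕ, k ≤ N → ∀ l : ℝ, 0 ≤ l → l ≤ 1 →
      sInf {r : ℝ | ∃ l ∈ Set.Icc (0 : ℝ) 1, r = -(l * v * a k) + B * l ^ q}
        ≤ -(l * v * a k) + B * l ^ q := by
    intro k hk l hl0 hl1
    exact csInf_le (hbdd k hk) ⟨l, ⟨hl0, hl1⟩, rfl⟩
  have hinf0 : ∀ k : ℕ, k ≤ N →
      sInf {r : ℝ | ∃ l ∈ Set.Icc (0 : ℝ) 1, r = -(l * v * a k) + B * l ^ q} ≤ 0 := by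
    intro k hk
    have := hmem k hk 0 le_rfl zero_le_one
    simpa [Real.zero_rpow (ne_of_gt hq0)] using this
  -- crude bound : a m ≤ a0 + m * δ for m ≤ N
  have hcrude : ∀ m : ℕ, m ≤ N → a m ≤ a0 + m * δ := by
    intro m
    induction m with
    | zero => intro _; simp [ha0]
    | succ n ih =>
      intro hn
      have hn' : n ≤ N := le_trans (Nat.le_succ n) hn
      have h1 := hrec (n+1) (Nat.le_add_left 1 n) hn
      have h2 := hinf0 n hn'
      have h3 := ih hn'
      simp only [Nat.add_sub_cancel] at h1
      push_cast
      nlinarith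
  have hmδ : ∀ m : ℕ, m ≤ N → (m:ℝ) * δ ≤ 1 := by
    intro m hm
    have h1 : (m:ℝ) ≤ δ ^ (-(1 / q)) := le_trans (by exact_mod_cast hm) hNle
    have h2 : (m:ℝ) * δ ≤ δ ^ (-(1 / q)) * δ := by nlinarith
    have h3 : δ ^ (-(1 / q)) * δ = δ ^ (-(1 / q) + 1) :=
      (Real.rpow_add_one (ne_of_gt hδ0) _).symm
    have h4 : δ ^ (-(1 / q) + 1) ≤ 1 := by
      apply Real.rpow_le_one hδ0.le hδ1
      have : 1 / q < 1 := by rw [div_lt_one hq0]; exact hq1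
      linarith
    linarith [h3 ▸ h2]
  have hsmall : ∀ m : ℕ, m ≤ N → a m ≤ |a0| + 1 := by
    intro m hm
    have := hcrude m hm
    have := hmδ m hm
    have := le_abs_self a0
    linarith
  have hδm : ∀ m : ℕ, 1 ≤ m → m ≤ N → δ ≤ ((m:ℝ) ^ q)⁻¹ := by
    intro m hm1 hm
    have hx0 : (0:ℝ) < (m:ℝ) := by exact_mod_cast hm1
    have h1 : (m:ℝ) ≤ δ ^ (-(1 / q)) := le_trans (by exact_mod_cast hm) hNle
    have h2 : (m:ℝ) ^ q ≤ (δ ^ (-(1 / q))) ^ q := Real.rpow_le_rpow hx0.le h1 hq0.le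
    have h3 : (δ ^ (-(1 / q))) ^ q = δ⁻¹ := by
      rw [← Real.rpow_mul hδ0.le]
      have e : -(1 / q) * q = -1 := by field_simp
      rw [e, Real.rpow_neg_one]
    rw [h3] at h2
    have hq0' : (0:ℝ) < (m:ℝ) ^ q := Real.rpow_pos_of_pos hx0 q
    rw [le_inv_comm₀ hδ0 hq0']
    exact h2
  -- small case
  have hsmallcase : ∀ m : ℕ, 1 ≤ m → m ≤ N → m ≤ M → a m ≤ C * (m:ℝ) ^ (1 - q) := by
    intro m hm1 hmN hmM
    have hx0 : (0:ℝ) < (m:ℝ) := by exact_mod_cast hm1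
    have hx1 : (1:ℝ) ≤ (m:ℝ) := by exact_mod_cast hm1
    have hxM : (m:ℝ) ≤ (M:ℝ) := by exact_mod_cast hmM
    have h1 : (m:ℝ) ^ (q - 1) ≤ (m:ℝ) ^ (1:ℝ) :=
      Real.rpow_le_rpow_of_exponent_le hx1 (by linarith)
    have h2 : (m:ℝ) ^ (1 - q) = ((m:ℝ) ^ (q - 1))⁻¹ := by
      rw [← Real.rpow_neg hx0.le]; ring_nf
    have hq1' : (0:ℝ) < (m:ℝ) ^ (q - 1) := Real.rpow_pos_of_pos hx0 _
    have h3 : ((m:ℝ))⁻¹ ≤ (m:ℝ) ^ (1 - q) := by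
      rw [h2]
      apply inv_anti₀ hq1'
      simpa using h1
    have h4 : (M:ℝ)⁻¹ ≤ ((m:ℝ))⁻¹ := inv_anti₀ hx0 hxM
    have h5 : (|a0| + 1) ≤ C * (M:ℝ)⁻¹ := by
      rw [hCdef]
      have e : ((|a0| + 1) * M + B * (3 / v) ^ q + 1) * (M:ℝ)⁻¹
          = (|a0| + 1) * ((M:ℝ) * (M:ℝ)⁻¹) + (B * (3 / v) ^ q + 1) * (M:ℝ)⁻¹ := by ring
      rw [e, mul_inv_cancel₀ (ne_of_gt hM0), mul_one]
      have : 0 ≤ (B * (3 / v) ^ q + 1) * (M:ℝ)⁻¹ := by positivity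
      linarith
    have h6 : C * (M:ℝ)⁻¹ ≤ C * (m:ℝ) ^ (1 - q) :=
      mul_le_mul_of_nonneg_left (le_trans h4 h3) hC0.le
    exact le_trans (hsmall m hmN) (le_trans h5 h6)
  -- main induction
  intro m
  induction m with
  | zero => intro h; exact absurd h (by norm_num)
  | succ n ih =>
    intro _ hmN
    by_cases hcase : n + 1 ≤ M
    · exact hsmallcase (n+1) (Nat.le_add_left 1 n) hmN hcase
    push_neg at hcase
    have hnM : M ≤ n := Nat.lt_succ_iff.mp hcase
    have hn1 : 1 ≤ n := le_trans (by norm_num) (le_trans hM3 hnM)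
    have hnN : n ≤ N := le_trans (Nat.le_succ n) hmN
    have IH := ih hn1 hnN
    have hx4 : (4:ℝ) ≤ ((n+1 : ℕ) : ℝ) := by
      exact_mod_cast (show 4 ≤ n + 1 by omega)
    have hx0 : (0:ℝ) < ((n+1 : ℕ) : ℝ) := by linarith
    have hxv : 3 / v ≤ ((n+1 : ℕ) : ℝ) := by
      have hMx : (M:ℝ) ≤ ((n+1 : ℕ) : ℝ) := by
        exact_mod_cast le_trans hnM (Nat.le_succ n)
      linarith
    have hl0 : (0:ℝ) ≤ 3 / (v * ((n+1 : ℕ) : ℝ)) := by positivity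
    have hl1 : 3 / (v * ((n+1 : ℕ) : ℝ)) ≤ 1 := by
      rw [div_le_one (by positivity)]
      have e : v * (3 / v) = 3 := by field_simp
      nlinarith [hxv, hv]
    have h1 := hrec (n+1) (Nat.le_add_left 1 n) hmN
    simp only [Nat.add_sub_cancel] at h1
    have h2 := hmem n hnN _ hl0 hl1
    have hstep : a (n+1) ≤ a n + (-(3 / (v * ((n+1 : ℕ) : ℝ)) * v * a n)
        + B * (3 / (v * ((n+1 : ℕ) : ℝ))) ^ q) + δ := by linarith
    have hIH' : a n ≤ C * (((n+1 : ℕ) : ℝ) - 1) ^ (1 - q) := by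
      have e : ((n : ℕ) : ℝ) = ((n+1 : ℕ) : ℝ) - 1 := by push_cast; ring
      rw [← e]; exact IH
    exact seq_aux_step q v B C ((n+1 : ℕ) : ℝ) (a n) (a (n+1)) δ hq1 hq2 hv hB hC0
      hCbig hx4 (hpos n hnN) (hδm (n+1) (Nat.le_add_left 1 n) hmN) hIH' hstep
end

section
/- Let X be a real Banach space, D a symmetric dictionary in X, and E : X → ℝ a convex Fréchet differentiable function. Let A > 0 and f ∈ L_A := {g ∈ X : g/A ∈ A1(D)}. Let c_1, …, c_k ∈ ℝ, φ_1, …, φ_k ∈ D, and G_k := Σ_{j=1}^k c_j φ_j. Then E_D(G_k) ≥ (E(G_k) − E(f)) / (A + A_k), where E_D(G) := sup_{g ∈ D} ⟨−E'(G), g⟩ and A_k := Σ_{j=1}^k |c_j|. -/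
open Set Filter

variable {X : Type*} [NormedAddCommGroup X] [NormedSpace ℝ X] [CompleteSpace X]

/-- Gradient inequality for convex functions. -/
lemma convex_grad_ineq (E : X → ℝ) (hE : ConvexOn ℝ Set.univ E)
    {x : X} {L : X →L[ℝ] ℝ} (h : HasFDerivAt E L x) (y : X) :
    L (y - x) ≤ E y - E x := by
  set v := y - x with hv
  have hline : HasDerivAt (fun t : ℝ => x + t • v) v 0 := by
    have h1 : HasDerivAt (fun t : ℝ => t • v) ((1 : ℝ) • v) 0 :=
      (hasDerivAt_id (0 : ℝ)).smul_const v
    simpa using h1.const_add x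
  have hg : HasDerivAt (fun t : ℝ => E (x + t • v)) (L v) 0 := by
    have hx0 : HasFDerivAt E L ((fun t : ℝ => x + t • v) 0) := by simpa using h
    exact hx0.comp_hasDerivAt 0 hline
  set g : ℝ → ℝ := fun t => E (x + t • v) with hgdef
  have hslope : Tendsto (slope g 0) (nhdsWithin 0 (Set.Ioi 0)) (nhds (L v)) :=
    (hasDerivAt_iff_tendsto_slope.mp hg).mono_left
      (nhdsWithin_mono 0 (fun t ht => ne_of_gt ht))
  have hbound : ∀ᶠ t in nhdsWithin 0 (Set.Ioi 0), slope g 0 t ≤ E y - E x := by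
    filter_upwards [Ioc_mem_nhdsGT_of_mem (by norm_num : (0:ℝ) ∈ Set.Ico 0 1)]
      with t ht
    have ht0 : 0 < t := ht.1
    have ht1 : t ≤ 1 := ht.2
    have hconv := hE.2 (Set.mem_univ x) (Set.mem_univ y)
      (by linarith : (0:ℝ) ≤ 1 - t) (le_of_lt ht0) (by ring)
    have hxt : x + t • v = (1 - t) • x + t • y := by
      rw [hv]; module
    have hgt : g t ≤ (1 - t) * E x + t * E y := by
      rw [hgdef]; simp only; rw [hxt]; simpa [smul_eq_mul] using hconv
    have hg0 : g 0 = E x := by simp [hgdef]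
    rw [slope_def_field]
    rw [hg0, sub_zero, div_le_iff₀ ht0]
    nlinarith
  have := le_of_tendsto hslope hbound
  simpa [hv] using this

/-- If `f ∈ L_A := {g : g/A ∈ A1(D)}` and
`G_k = Σ_{j=1}^k c_j φ_j` with `φ_j ∈ D`, then
`E_D(G_k) ≥ (E(G_k) - E(f)) / (A + A_k)` where
`E_D(G) := sup_{g ∈ D} ⟨-E'(G), g⟩` and `A_k := Σ |c_j|`. -/
theorem dictionary_norming_lemma
    (D : Set X) (hD : SymmetricDictionary D)
    (E : X → ℝ) (hEconv : ConvexOn ℝ Set.univ E)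
    (E' : X → X →L[ℝ] ℝ) (hE' : ∀ x : X, HasFDerivAt E (E' x) x)
    (A : ℝ) (hA : 0 < A) (f : X) (hf : A⁻¹ • f ∈ A1 D)
    (k : ℕ) (c : Fin k → ℝ) (φ : Fin k → X) (hφ : ∀ j, φ j ∈ D) :
    sSup {r : ℝ | ∃ g ∈ D, r = -(E' (∑ j, c j • φ j) g)} ≥
      (E (∑ j, c j • φ j) - E f) / (A + ∑ j, |c j|) := by
  set G : X := ∑ j, c j • φ j with hG
  set F : X →L[ℝ] ℝ := -(E' G) with hF
  have hSset : {r : ℝ | ∃ g ∈ D, r = -(E' G g)} = {r : ℝ | ∃ g ∈ D, r = F g} := by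
    simp [hF]
  set s : ℝ := sSup {r : ℝ | ∃ g ∈ D, r = -(E' G g)} with hs
  have hAk : 0 ≤ ∑ j, |c j| := Finset.sum_nonneg fun j _ => abs_nonneg _
  have hden : 0 < A + ∑ j, |c j| := by linarith
  rcases Set.eq_empty_or_nonempty D with hDe | ⟨g0, hg0⟩
  · -- D empty: X is a subsingleton
    have hsub : Subsingleton X := by
      have h2 := hD.2.2
      rw [hDe] at h2
      simp only [Submodule.span_empty, Submodule.bot_coe] at h2
      have : closure ({0} : Set X) = ({0} : Set X) := isClosed_singleton.closure_eq
      rw [this] at h2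
      constructor
      intro a b
      have ha : a ∈ ({0} : Set X) := h2 ▸ Set.mem_univ a
      have hb : b ∈ ({0} : Set X) := h2 ▸ Set.mem_univ b
      simp only [Set.mem_singleton_iff] at ha hb
      rw [ha, hb]
    have hfG : f = G := Subsingleton.elim f G
    have hse : {r : ℝ | ∃ g ∈ D, r = -(E' G g)} = ∅ := by
      rw [hDe]; simp
    rw [ge_iff_le, hs, hse, Real.sSup_empty, hfG, sub_self, zero_div]
  · -- D nonempty
    have hbdd : BddAbove {r : ℝ | ∃ g ∈ D, r = -(E' G g)} := by
      refine ⟨‖F‖, ?_⟩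
      rintro r ⟨g, hg, rfl⟩
      have : -(E' G g) = F g := by simp [hF]
      rw [this]
      calc F g ≤ |F g| := le_abs_self _
        _ ≤ ‖F‖ * ‖g‖ := F.le_opNorm g
        _ = ‖F‖ := by rw [hD.1 g hg, mul_one]
    have hle : ∀ g ∈ D, F g ≤ s := by
      intro g hg
      apply le_csSup hbdd
      exact ⟨g, hg, by simp [hF]⟩
    -- extend to A1 D
    have hhull : ∀ x ∈ convexHull ℝ D, F x ≤ s := by
      intro x hx
      have : convexHull ℝ D ⊆ {x : X | F x ≤ s} := by
        apply convexHull_min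
        · exact hle
        · exact convex_halfSpace_le (F.toLinearMap.isLinear) s
      exact this hx
    have hA1 : ∀ x ∈ A1 D, F x ≤ s := by
      intro x hx
      have hcl : IsClosed {x : X | F x ≤ s} := isClosed_le F.continuous continuous_const
      have := closure_minimal (fun y hy => hhull y hy) hcl
      exact this hx
    -- F f ≤ A * s
    have hFf : F f ≤ A * s := by
      have h1 : F (A⁻¹ • f) ≤ s := hA1 _ hf
      have h2 : F (A⁻¹ • f) = A⁻¹ * F f := by simp [map_smul, smul_eq_mul]
      rw [h2] at h1
      calc F f = A * (A⁻¹ * F f) := by field_simp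
        _ ≤ A * s := by exact mul_le_mul_of_nonneg_left h1 (le_of_lt hA)
    -- -F G ≤ (∑ |c j|) * s
    have hFG : -F G ≤ (∑ j, |c j|) * s := by
      have hFGeq : -F G = ∑ j, (-(c j)) * F (φ j) := by
        rw [hG, map_sum]
        rw [← Finset.sum_neg_distrib]
        apply Finset.sum_congr rfl
        intro j _
        simp [smul_eq_mul]
      rw [hFGeq, Finset.sum_mul]
      apply Finset.sum_le_sum
      intro j _
      rcases le_or_gt (c j) 0 with hcj | hcj
      · have : |c j| = -(c j) := abs_of_nonpos hcj
        rw [this]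
        exact mul_le_mul_of_nonneg_left (hle _ (hφ j)) (by linarith)
      · have habs : |c j| = c j := abs_of_pos hcj
        have hneg : F (-(φ j)) ≤ s := hle _ (hD.2.1 _ (hφ j))
        have : F (-(φ j)) = -F (φ j) := by simp
        rw [this] at hneg
        rw [habs]
        have := mul_le_mul_of_nonneg_left hneg (le_of_lt hcj)
        linarith [this]
    -- gradient inequality
    have hgrad : (E' G) (f - G) ≤ E f - E G := convex_grad_ineq E hEconv (hE' G) f
    have hkey : E G - E f ≤ (A + ∑ j, |c j|) * s := by
      have h1 : E G - E f ≤ (E' G) (G - f) := by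
        have : (E' G) (G - f) = -((E' G) (f - G)) := by
          rw [← map_neg]; congr 1; abel
        rw [this]; linarith
      have h2 : (E' G) (G - f) = F f - F G := by
        simp only [hF, map_sub]
        simp
        ring
      rw [h2] at h1
      calc E G - E f ≤ F f - F G := h1
        _ ≤ A * s + (∑ j, |c j|) * s := by linarith
        _ = (A + ∑ j, |c j|) * s := by ring
    rw [ge_iff_le, div_le_iff₀ hden]
    linarith [hkey]
end

section
/- Let α, β, A be positive real numbers with α < β ≤ 1, and let U be a positive integer. Let (a_n)_{n≥1} be a sequence of real numbers with a_1 < A such that: (i) for all n ≥ 2, a_n ≤ a_{n−1} + A(n−1)^{−α}; and (ii) whenever ν ≥ U and a_ν ≥ A ν^{−α}, one has a_{ν+1} ≤ a_ν (1 − β/ν). Then there exists a constant C = C(α, β, A, U) such that a_n ≤ C·n^{−α} for all n ≥ 1. -/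
set_option maxHeartbeats 800000

/-- Lemma on sequences: if `a 1 < A`, `a n ≤ a (n-1) + A (n-1)^(-α)`
for `n ≥ 2`, and whenever `ν ≥ U` and `a ν ≥ A ν^(-α)` one has
`a (ν+1) ≤ a ν (1 - β/ν)`, then `a n ≤ C n^(-α)` for all `n ≥ 1`,
with `C = C(α, β, A, U)`. -/
theorem sequence_decay_lemma (α β A : ℝ) (U : ℕ)
    (hα : 0 < α) (hαβ : α < β) (hβ : β ≤ 1) (hA : 0 < A) (hU : 0 < U) :
    ∃ C : ℝ, 0 < C ∧
      ∀ a : ℕ → ℝ, a 1 < A →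
        (∀ n : ℕ, 2 ≤ n → a n ≤ a (n - 1) + A * ((n : ℝ) - 1) ^ (-α)) →
        (∀ ν : ℕ, U ≤ ν → A * (ν : ℝ) ^ (-α) ≤ a ν →
          a (ν + 1) ≤ a ν * (1 - β / (ν : ℝ))) →
        ∀ n : ℕ, 1 ≤ n → a n ≤ C * (n : ℝ) ^ (-α) := by
  have hα1 : α ≤ 1 := le_of_lt (lt_of_lt_of_le hαβ hβ)
  refine ⟨A * ((U : ℝ) ^ 2 + 4), by positivity, ?_⟩
  intro a ha1 hrec hdec
  set C := A * ((U : ℝ) ^ 2 + 4) with hCdef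
  have hCpos : 0 < C := by positivity
  have hUR : (1 : ℝ) ≤ (U : ℝ) := by exact_mod_cast hU
  -- crude linear bound
  have crude : ∀ n : ℕ, 1 ≤ n → a n ≤ A * n := by
    intro n hn
    induction n, hn using Nat.le_induction with
    | base => simpa using ha1.le
    | succ n hn ih =>
      have h2 : (2 : ℕ) ≤ n + 1 := by omega
      have hr := hrec (n + 1) h2
      have hs : ((n + 1 : ℕ) : ℝ) - 1 = (n : ℝ) := by push_cast; ring
      rw [Nat.add_sub_cancel, hs] at hr
      have hn1 : (1 : ℝ) ≤ (n : ℝ) := by exact_mod_cast hn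
      have hpow : ((n : ℝ)) ^ (-α) ≤ 1 :=
        Real.rpow_le_one_of_one_le_of_nonpos hn1 (by linarith)
      have : a (n + 1) ≤ A * n + A * 1 := by nlinarith
      calc a (n + 1) ≤ A * n + A * 1 := this
        _ = A * ((n + 1 : ℕ) : ℝ) := by push_cast; ring
  -- bound for small n
  have small : ∀ n : ℕ, 1 ≤ n → n ≤ U → a n ≤ C * (n : ℝ) ^ (-α) := by
    intro n h1 h2
    have hn1 : (1 : ℝ) ≤ (n : ℝ) := by exact_mod_cast h1
    have hn0 : (0 : ℝ) < (n : ℝ) := by linarith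
    have hnU : (n : ℝ) ≤ (U : ℝ) := by exact_mod_cast h2
    have hpow : (n : ℝ) ^ (-(1 : ℝ)) ≤ (n : ℝ) ^ (-α) :=
      Real.rpow_le_rpow_of_exponent_le hn1 (by linarith)
    have hinv : (n : ℝ)⁻¹ ≤ (n : ℝ) ^ (-α) := by rwa [Real.rpow_neg_one] at hpow
    have h3 : A * (n : ℝ) ≤ C / (n : ℝ) := by
      rw [le_div_iff₀ hn0, hCdef]
      nlinarith [mul_le_mul hnU hnU hn0.le (by linarith : (0:ℝ) ≤ (U:ℝ)), hA.le]
    calc a n ≤ A * n := crude n h1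
      _ ≤ C / n := h3
      _ = C * (n : ℝ)⁻¹ := by ring
      _ ≤ C * (n : ℝ) ^ (-α) := by
          exact mul_le_mul_of_nonneg_left hinv hCpos.le
  -- main induction
  have key : ∀ n : ℕ, U ≤ n → a n ≤ C * (n : ℝ) ^ (-α) := by
    intro n hn
    induction n, hn using Nat.le_induction with
    | base => exact small U hU le_rfl
    | succ ν hν ih =>
      have hν1 : 1 ≤ ν := le_trans hU hν
      have hνR : (1 : ℝ) ≤ (ν : ℝ) := by exact_mod_cast hν1
      have hν0 : (0 : ℝ) < (ν : ℝ) := by linarith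
      have hpν : (0 : ℝ) < (ν : ℝ) ^ (-α) := Real.rpow_pos_of_pos hν0 _
      have hcast : ((ν + 1 : ℕ) : ℝ) = (ν : ℝ) + 1 := by push_cast; ring
      rw [hcast]
      have hq : (0 : ℝ) < ((ν : ℝ) + 1) ^ α := Real.rpow_pos_of_pos (by linarith) _
      have hp : (0 : ℝ) < (ν : ℝ) ^ α := Real.rpow_pos_of_pos hν0 _
      have hqneg : ((ν : ℝ) + 1) ^ (-α) = (((ν : ℝ) + 1) ^ α)⁻¹ :=
        Real.rpow_neg (by linarith) _
      have hpneg : (ν : ℝ) ^ (-α) = ((ν : ℝ) ^ α)⁻¹ := Real.rpow_neg hν0.le _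
      rcases le_or_gt (A * (ν : ℝ) ^ (-α)) (a ν) with hge | hlt
      · -- decay case
        have hstep := hdec ν hν hge
        have hβν : β / (ν : ℝ) ≤ 1 := by
          rw [div_le_one hν0]; linarith
        have hfac : 0 ≤ 1 - β / (ν : ℝ) := by linarith
        -- Bernoulli: (1 + 1/ν)^α ≤ 1 + α/ν
        have bern : ((ν : ℝ) + 1) ^ α ≤ (ν : ℝ) ^ α * (1 + α / ν) := by
          have h1 : ((ν : ℝ) + 1) = (ν : ℝ) * (1 + 1 / ν) := by field_simp
          rw [h1, Real.mul_rpow hν0.le (by positivity)]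
          have hb : (1 + 1 / (ν : ℝ)) ^ α ≤ 1 + α * (1 / ν) :=
            rpow_one_add_le_one_add_mul_self (by have h := one_div_nonneg.mpr hν0.le; linarith) hα.le hα1
          have : 1 + α * (1 / (ν : ℝ)) = 1 + α / ν := by ring
          rw [this] at hb
          exact mul_le_mul_of_nonneg_left hb hp.le
        -- key: ν^{-α} * (1 - β/ν) ≤ (ν+1)^{-α}
        have G : (ν : ℝ) ^ (-α) * (1 - β / ν) ≤ ((ν : ℝ) + 1) ^ (-α) := by
          rw [hpneg, hqneg, inv_eq_one_div, inv_eq_one_div, div_mul_eq_mul_div,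
            div_le_div_iff₀ hp hq, one_mul]
          have h2 : (1 - β / (ν : ℝ)) * (((ν : ℝ)) ^ α * (1 + α / ν)) ≤ (ν : ℝ) ^ α := by
            have h3 : (1 - β / (ν : ℝ)) * (1 + α / ν) ≤ 1 := by
              have hβ0 : 0 < β := lt_trans hα hαβ
              have hαν : α / (ν : ℝ) ≤ β / (ν : ℝ) := by gcongr
              have h4 : 0 ≤ α / (ν : ℝ) := by positivity
              have h5 : 0 ≤ β / (ν : ℝ) := by positivity
              nlinarith
            nlinarith
          calc (1 - β / (ν : ℝ)) * (((ν : ℝ) + 1) ^ α)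
              ≤ (1 - β / (ν : ℝ)) * ((ν : ℝ) ^ α * (1 + α / ν)) :=
                mul_le_mul_of_nonneg_left bern hfac
            _ ≤ (ν : ℝ) ^ α := h2
            _ = 1 * (ν : ℝ) ^ α := (one_mul _).symm
        calc a (ν + 1) ≤ a ν * (1 - β / ν) := hstep
          _ ≤ C * (ν : ℝ) ^ (-α) * (1 - β / ν) := mul_le_mul_of_nonneg_right ih hfac
          _ = C * ((ν : ℝ) ^ (-α) * (1 - β / ν)) := by ring
          _ ≤ C * (((ν : ℝ) + 1) ^ (-α)) := mul_le_mul_of_nonneg_left G hCpos.le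
      · -- bounded case
        have h2 : (2 : ℕ) ≤ ν + 1 := by omega
        have hr := hrec (ν + 1) h2
        have hs : ((ν + 1 : ℕ) : ℝ) - 1 = (ν : ℝ) := by push_cast; ring
        rw [Nat.add_sub_cancel, hs] at hr
        have hbd : a (ν + 1) ≤ 2 * A * (ν : ℝ) ^ (-α) := by nlinarith
        -- (ν+1)^{-α} ≥ (1/2) ν^{-α}
        have hmono : ((ν : ℝ) + 1) ^ α ≤ (2 * (ν : ℝ)) ^ α :=
          Real.rpow_le_rpow (by linarith) (by linarith) hα.le
        have h2ν : (2 * (ν : ℝ)) ^ α = (2 : ℝ) ^ α * (ν : ℝ) ^ α :=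
          Real.mul_rpow (by norm_num) hν0.le
        have h2α : (2 : ℝ) ^ α ≤ 2 := by
          calc (2 : ℝ) ^ α ≤ (2 : ℝ) ^ (1 : ℝ) :=
                Real.rpow_le_rpow_of_exponent_le (by norm_num) hα1
            _ = 2 := Real.rpow_one 2
        have hG : (ν : ℝ) ^ (-α) ≤ 2 * ((ν : ℝ) + 1) ^ (-α) := by
          rw [hpneg, hqneg]
          rw [inv_eq_one_div, inv_eq_one_div, mul_one_div, div_le_div_iff₀ hp hq]
          calc 1 * (((ν : ℝ) + 1) ^ α) = ((ν : ℝ) + 1) ^ α := by ring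
            _ ≤ (2 : ℝ) ^ α * (ν : ℝ) ^ α := by rw [← h2ν]; exact hmono
            _ ≤ 2 * (ν : ℝ) ^ α := mul_le_mul_of_nonneg_right h2α hp.le
        have hC4 : 4 * A ≤ C := by rw [hCdef]; nlinarith
        calc a (ν + 1) ≤ 2 * A * (ν : ℝ) ^ (-α) := hbd
          _ ≤ 2 * A * (2 * ((ν : ℝ) + 1) ^ (-α)) := by
              apply mul_le_mul_of_nonneg_left hG (by positivity)
          _ = 4 * A * ((ν : ℝ) + 1) ^ (-α) := by ring
          _ ≤ C * (((ν : ℝ) + 1) ^ (-α)) := by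
              apply mul_le_mul_of_nonneg_right hC4 (Real.rpow_pos_of_pos (by linarith) _).le
  intro n hn
  rcases le_or_gt U n with h | h
  · exact key n h
  · exact small n hn h.le
end
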